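/- Let Γ be an anti-unitary involution on a complex Hilbert space 𝔥, P a basis projection with range 𝔭, 𝔮 a closed Γ-invariant subspace, and M := P(Re 𝔮) where Re 𝔮 = {q ∈ 𝔮 : Γq = q}. Then P(Re 𝔮^⊥) is dense in iM' := {p ∈ 𝔭 : ⟨q + Γq, p⟩ + ⟨p, q + Γq⟩ = 0 for all q ∈ 𝔮}, and in particular P(Re 𝔮^⊥) ⊆ iM'. -/

import Mathlib

open scoped ComplexInnerProductSpace

/-- Lemma 6.1: with `M = P(Re 𝔮)`, the set `P(Re 𝔮ᗮ)` is contained and dense in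
`iM' = {p ∈ 𝔭 : ⟪q + Γq, p⟫ + ⟪p, q + Γq⟫ = 0 for all q ∈ 𝔮}`. -/
theorem real_subspace_duality_dense
    {E : Type*} [NormedAddCommGroup E] [InnerProductSpace ℂ E] [CompleteSpace E]
    (Γ : E → E)
    (hΓ_add : ∀ x y, Γ (x + y) = Γ x + Γ y)
    (hΓ_smul : ∀ (c : ℂ) (x : E), Γ (c • x) = (starRingEnd ℂ) c • Γ x)
    (hΓ_inner : ∀ f h : E, ⟪Γ f, Γ h⟫ = ⟪h, f⟫)
    (hΓ_inv : ∀ x, Γ (Γ x) = x)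
    (P : E →L[ℂ] E) (hP_proj : P ∘L P = P) (hP_sa : IsSelfAdjoint P)
    (hP_basis : ∀ x, P x + Γ (P (Γ x)) = x)
    (𝔮 : Submodule ℂ E) (h𝔮_closed : IsClosed (𝔮 : Set E))
    (h𝔮Γ : ∀ q ∈ 𝔮, Γ q ∈ 𝔮)
    (hgen1 : LinearMap.range (P : E →ₗ[ℂ] E) ⊓ 𝔮 = ⊥)
    (hgen2 : LinearMap.range (P : E →ₗ[ℂ] E) ⊓ 𝔮ᗮ = ⊥) :
    P '' {x : E | x ∈ 𝔮ᗮ ∧ Γ x = x}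
      ⊆ {p : E | p ∈ LinearMap.range (P : E →ₗ[ℂ] E) ∧ ∀ q ∈ 𝔮, ⟪q + Γ q, p⟫ + ⟪p, q + Γ q⟫ = 0} ∧
    ∀ p₀ ∈ {p : E | p ∈ LinearMap.range (P : E →ₗ[ℂ] E) ∧ ∀ q ∈ 𝔮, ⟪q + Γ q, p⟫ + ⟪p, q + Γ q⟫ = 0},
      p₀ ∈ closure (P '' {x : E | x ∈ 𝔮ᗮ ∧ Γ x = x}) := by
  have hΓ0 : Γ 0 = 0 := by
    have h := hΓ_smul 0 0
    simpa using h
  have hΓ_sub : ∀ x y, Γ (x - y) = Γ x - Γ y := by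
    intro x y
    have hneg : Γ (-y) = -Γ y := by
      have h := hΓ_smul (-1) y
      simpa using h
    rw [sub_eq_add_neg, hΓ_add, hneg, sub_eq_add_neg]
  have hsym : ∀ u v : E, ⟪P u, v⟫ = ⟪u, P v⟫ :=
    ContinuousLinearMap.isSelfAdjoint_iff_isSymmetric.mp hP_sa
  have hPP : ∀ y : E, P (P y) = P y := by
    intro y
    have h := congrArg (fun f : E →L[ℂ] E => f y) hP_proj
    simpa using h
  have hPΓ : ∀ p : E, p ∈ LinearMap.range (P : E →ₗ[ℂ] E) → P (Γ p) = 0 := by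
    rintro p ⟨y, rfl⟩
    have h1 := hP_basis (P y)
    rw [hPP] at h1
    have h2 : Γ (P (Γ (P y))) = 0 := by
      have := congrArg (fun z => z - P y) h1
      simpa using this
    have h3 := congrArg Γ h2
    rwa [hΓ_inv, hΓ0] at h3
  have hΓQperp : ∀ v ∈ 𝔮ᗮ, Γ v ∈ 𝔮ᗮ := by
    intro v hv
    rw [Submodule.mem_orthogonal]
    intro u hu
    have h := hΓ_inner (Γ u) v
    rw [hΓ_inv] at h
    rw [h]
    have h0 : ⟪Γ u, v⟫ = 0 := (Submodule.mem_orthogonal 𝔮 v).mp hv (Γ u) (h𝔮Γ u hu)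
    rw [← inner_conj_symm, h0, map_zero]
  constructor
  · rintro p ⟨x, ⟨hx_orth, hx_fix⟩, rfl⟩
    refine ⟨⟨x, rfl⟩, ?_⟩
    intro q hq
    have hrQ : q + Γ q ∈ 𝔮 := 𝔮.add_mem hq (h𝔮Γ q hq)
    have hrfix : Γ (q + Γ q) = q + Γ q := by
      rw [hΓ_add, hΓ_inv, add_comm]
    have hdecomp : P (q + Γ q) + Γ (P (q + Γ q)) = q + Γ q := by
      have h := hP_basis (q + Γ q)
      rwa [hrfix] at h
    have h1 : ⟪q + Γ q, P x⟫ = ⟪P (q + Γ q), x⟫ := (hsym (q + Γ q) x).symm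
    have h2 : ⟪P x, q + Γ q⟫ = ⟪Γ (P (q + Γ q)), x⟫ := by
      rw [hsym x (q + Γ q)]
      have h := hΓ_inner (P (q + Γ q)) x
      rw [hx_fix] at h
      exact h.symm
    rw [h1, h2, ← inner_add_left, hdecomp]
    exact (Submodule.mem_orthogonal 𝔮 x).mp hx_orth _ hrQ
  · rintro p₀ ⟨hp₀range, hcond⟩
    apply subset_closure
    haveI : CompleteSpace 𝔮 := h𝔮_closed.completeSpace_coe
    set x₀ := p₀ + Γ p₀ with hx₀
    have hx₀fix : Γ x₀ = x₀ := by rw [hx₀, hΓ_add, hΓ_inv, add_comm]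
    set a : E := (𝔮.orthogonalProjectionOnto x₀ : E) with ha
    have haQ : a ∈ 𝔮 := (𝔮.orthogonalProjectionOnto x₀).2
    have hbQ : x₀ - a ∈ 𝔮ᗮ := 𝔮.sub_starProjection_mem_orthogonal x₀
    -- Γ a = a
    have haΓ : Γ a = a := by
      have hdiff1 : a - Γ a ∈ 𝔮 := 𝔮.sub_mem haQ (h𝔮Γ a haQ)
      have hdiff2 : a - Γ a ∈ 𝔮ᗮ := by
        have h1 : Γ (x₀ - a) ∈ 𝔮ᗮ := hΓQperp _ hbQ
        have h2 : Γ (x₀ - a) = x₀ - Γ a := by rw [hΓ_sub, hx₀fix]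
        rw [h2] at h1
        have : a - Γ a = (x₀ - Γ a) - (x₀ - a) := by abel
        rw [this]
        exact Submodule.sub_mem _ h1 hbQ
      have h0 : ⟪a - Γ a, a - Γ a⟫ = 0 :=
        (Submodule.mem_orthogonal 𝔮 (a - Γ a)).mp hdiff2 _ hdiff1
      have : a - Γ a = 0 := inner_self_eq_zero.mp h0
      have := sub_eq_zero.mp this
      exact this.symm
    -- a = 0
    have hA : a = 0 := by
      have hq2 : (2⁻¹ : ℂ) • a ∈ 𝔮 := 𝔮.smul_mem _ haQ
      have hsum : (2⁻¹ : ℂ) • a + Γ ((2⁻¹ : ℂ) • a) = a := by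
        rw [hΓ_smul, haΓ]
        have : (starRingEnd ℂ) (2⁻¹ : ℂ) = (2⁻¹ : ℂ) := by
          rw [map_inv₀, Complex.conj_ofNat]
        rw [this, ← add_smul]
        norm_num
      have hc := hcond _ hq2
      rw [hsum] at hc
      -- hc : ⟪a, p₀⟫ + ⟪p₀, a⟫ = 0
      have hip : ⟪a, Γ p₀⟫ = ⟪p₀, a⟫ := by
        have h := hΓ_inner (Γ a) p₀
        rwa [hΓ_inv, haΓ] at h
      have h1 : ⟪a, x₀⟫ = ⟪a, p₀⟫ + ⟪p₀, a⟫ := by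
        rw [hx₀, inner_add_right, hip]
      have h2 : ⟪a, x₀ - a⟫ = 0 :=
        (Submodule.mem_orthogonal 𝔮 (x₀ - a)).mp hbQ a haQ
      have h3 : ⟪a, a⟫ = 0 := by
        have : ⟪a, a⟫ = ⟪a, x₀⟫ - ⟪a, x₀ - a⟫ := by
          rw [inner_sub_right]; ring
        rw [this, h1, h2, hc, sub_zero]
      exact inner_self_eq_zero.mp h3
    have hx₀Q : x₀ ∈ 𝔮ᗮ := by
      have := hbQ
      rwa [hA, sub_zero] at this
    have hPp₀ : P p₀ = p₀ := by
      obtain ⟨y, rfl⟩ := hp₀range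
      exact hPP y
    have hPx₀ : P x₀ = p₀ := by
      rw [hx₀, map_add, hPp₀, hPΓ p₀ hp₀range, add_zero]
    exact ⟨x₀, ⟨hx₀Q, hx₀fix⟩, hPx₀⟩
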